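/- Let S³ = {h ∈ ℍ : |h| = 1} be the group of unit quaternions, acted on by the circle T¹ via t·h = t·h·t⁻¹, where t is a complex number of modulus 1 acting via the standard inclusion ℂ ⊂ ℍ. Then the orbit space S³/T¹ (the quotient by the equivalence h ~ t·h·t⁻¹) is homeomorphic to the closed 2-dimensional disk D². -/

import Mathlib

/-- The standard inclusion ℂ ⊂ ℍ : `z = a + b·i ↦ a + b·i ∈ ℍ`. -/
noncomputable def toQ (z : ℂ) : Quaternion ℝ := ⟨z.re, z.im, 0, 0⟩

/-- The group `S³` of unit quaternions. -/
abbrev S3 : Type := {h : Quaternion ℝ // ‖h‖ = 1}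

/-- `h ~ t·h·t⁻¹` for unit complex numbers `t`. -/
def rel17 (x y : S3) : Prop :=
  ∃ t : ℂ, ‖t‖ = 1 ∧ y.1 = toQ t * x.1 * (toQ t)⁻¹

@[simp] lemma toQ_re (z : ℂ) : (toQ z).re = z.re := rfl
@[simp] lemma toQ_imI (z : ℂ) : (toQ z).imI = z.im := rfl
@[simp] lemma toQ_imJ (z : ℂ) : (toQ z).imJ = 0 := rfl
@[simp] lemma toQ_imK (z : ℂ) : (toQ z).imK = 0 := rfl

lemma normSq_of_unit (h : Quaternion ℝ) (hh : ‖h‖ = 1) :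
    h.re ^ 2 + h.imI ^ 2 + h.imJ ^ 2 + h.imK ^ 2 = 1 := by
  have h1 : Quaternion.normSq h = 1 := by
    rw [Quaternion.normSq_eq_norm_mul_self, hh]; ring
  rw [Quaternion.normSq_def'] at h1
  exact h1

lemma unit_of_normSq (h : Quaternion ℝ)
    (hh : h.re ^ 2 + h.imI ^ 2 + h.imJ ^ 2 + h.imK ^ 2 = 1) : ‖h‖ = 1 := by
  have h1 : ‖h‖ * ‖h‖ = 1 := by
    rw [← Quaternion.normSq_eq_norm_mul_self, Quaternion.normSq_def']; exact hh
  have h2 : (‖h‖ - 1) * (‖h‖ + 1) = 0 := by ring_nf; linarith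
  rcases mul_eq_zero.mp h2 with h3 | h3
  · linarith
  · have := norm_nonneg h; linarith

lemma toQ_ne_zero {t : ℂ} (ht : ‖t‖ = 1) : toQ t ≠ 0 := by
  intro h0
  have h1 : t = 0 := by
    apply Complex.ext
    · have := congrArg QuaternionAlgebra.re h0; simpa [Quaternion.re_zero] using this
    · have := congrArg QuaternionAlgebra.imI h0; simpa [Quaternion.imI_zero] using this
  rw [h1] at ht; simp at ht

lemma sq_norm_t {t : ℂ} (ht : ‖t‖ = 1) : t.re ^ 2 + t.im ^ 2 = 1 := by
  have : Complex.normSq t = 1 := by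
    rw [← Complex.sq_norm, ht]; norm_num
  rw [Complex.normSq_apply] at this
  nlinarith [this]

/-- invariance of `re` and `imI` under the relation -/
lemma rel17_re_imI {x y : S3} (h : rel17 x y) :
    y.1.re = x.1.re ∧ y.1.imI = x.1.imI := by
  obtain ⟨t, ht, hy⟩ := h
  have htne := toQ_ne_zero ht
  have habs := sq_norm_t ht
  have hy' : y.1 * toQ t = toQ t * x.1 := by
    rw [hy, mul_assoc, mul_assoc, inv_mul_cancel₀ htne, mul_one]
  have e1 := congrArg QuaternionAlgebra.re hy'
  have e2 := congrArg QuaternionAlgebra.imI hy'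
  simp only [Quaternion.re_mul, Quaternion.imI_mul, toQ_re, toQ_imI, toQ_imJ, toQ_imK,
    mul_zero, zero_mul, sub_zero, add_zero, zero_add] at e1 e2
  constructor
  · linear_combination t.re * e1 + t.im * e2 + (x.1.re - y.1.re) * habs
  · linear_combination t.re * e2 - t.im * e1 + (x.1.imI - y.1.imI) * habs

lemma rel17_of_eq {x y : S3} (hre : y.1.re = x.1.re) (himI : y.1.imI = x.1.imI) :
    rel17 x y := by
  have hx := normSq_of_unit x.1 x.2
  have hy := normSq_of_unit y.1 y.2
  have hr : x.1.imJ ^ 2 + x.1.imK ^ 2 = y.1.imJ ^ 2 + y.1.imK ^ 2 := by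
    rw [hre, himI] at hy; linarith
  by_cases hu0 : x.1.imJ = 0 ∧ x.1.imK = 0
  · -- then y = x
    refine ⟨1, by simp, ?_⟩
    have h1 : toQ 1 = 1 := by
      apply Quaternion.ext <;> simp [Quaternion.re_one, Quaternion.imI_one, Quaternion.imJ_one, Quaternion.imK_one]
    have hyJ : y.1.imJ = 0 := by nlinarith [hr, hu0.1, hu0.2, sq_nonneg y.1.imK]
    have hyK : y.1.imK = 0 := by nlinarith [hr, hu0.1, hu0.2, sq_nonneg y.1.imJ]
    rw [h1]
    simp only [one_mul, inv_one, mul_one]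
    apply Quaternion.ext
    · exact hre
    · exact himI
    · rw [hyJ, hu0.1]
    · rw [hyK, hu0.2]
  · -- rotate by square root
    set u : ℂ := ⟨x.1.imJ, x.1.imK⟩ with hu_def
    set u' : ℂ := ⟨y.1.imJ, y.1.imK⟩ with hu'_def
    have hune : u ≠ 0 := by
      intro h0
      apply hu0
      have h0' := Complex.ext_iff.mp h0
      exact ⟨h0'.1.trans Complex.zero_re, h0'.2.trans Complex.zero_im⟩
    obtain ⟨t, ht2⟩ := IsAlgClosed.exists_pow_nat_eq (u' / u) (n := 2) (by norm_num)
    have hnormsq : Complex.normSq u = Complex.normSq u' := by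
      simp only [Complex.normSq_apply]
      nlinarith [hr]
    have hnormu : ‖u‖ = ‖u'‖ := by
      rw [Complex.norm_def, Complex.norm_def, hnormsq]
    have hts : ‖t‖ = 1 := by
      have h1 : ‖t‖ ^ 2 = 1 := by
        rw [← norm_pow, ht2]
        rw [norm_div]
        rw [← hnormu]
        exact div_self fun h => hune (norm_eq_zero.mp h)
      have h2 : (‖t‖ - 1) * (‖t‖ + 1) = 0 := by ring_nf; nlinarith [h1]
      rcases mul_eq_zero.mp h2 with h3 | h3
      · linarith
      · have := norm_nonneg t; linarith
    have habs := sq_norm_t hts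
    have hkey : t ^ 2 * u = u' := by rw [ht2, div_mul_cancel₀ _ hune]
    have hc' : y.1.imJ = (t.re ^ 2 - t.im ^ 2) * x.1.imJ - 2 * t.re * t.im * x.1.imK := by
      have h1 := congrArg Complex.re hkey
      simp only [Complex.mul_re, pow_two, Complex.mul_im] at h1
      linear_combination -h1
    have hd' : y.1.imK = (t.re ^ 2 - t.im ^ 2) * x.1.imK + 2 * t.re * t.im * x.1.imJ := by
      have h2 := congrArg Complex.im hkey
      simp only [Complex.mul_re, pow_two, Complex.mul_im] at h2
      linear_combination -h2
    refine ⟨t, hts, ?_⟩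
    rw [eq_mul_inv_iff_mul_eq₀ (toQ_ne_zero hts)]
    apply Quaternion.ext <;>
      simp only [Quaternion.re_mul, Quaternion.imI_mul, Quaternion.imJ_mul, Quaternion.imK_mul,
        toQ_re, toQ_imI, toQ_imJ, toQ_imK, mul_zero, zero_mul, sub_zero, add_zero, zero_add,
        zero_sub, neg_mul]
    · linear_combination t.re * hre - t.im * himI
    · linear_combination t.im * hre + t.re * himI
    · linear_combination t.re * hc' + t.im * hd' +
        (t.re * x.1.imJ - t.im * x.1.imK) * habs
    · linear_combination t.re * hd' - t.im * hc' +
        (t.re * x.1.imK + t.im * x.1.imJ) * habs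

noncomputable def psiFun (x : S3) : EuclideanSpace ℝ (Fin 2) :=
  (WithLp.equiv 2 (Fin 2 → ℝ)).symm ![x.1.re, x.1.imI]

lemma psiFun_apply0 (x : S3) : psiFun x 0 = x.1.re := rfl
lemma psiFun_apply1 (x : S3) : psiFun x 1 = x.1.imI := rfl

lemma psiFun_mem (x : S3) : psiFun x ∈ Metric.closedBall (0 : EuclideanSpace ℝ (Fin 2)) 1 := by
  rw [Metric.mem_closedBall, dist_zero_right]
  have hx := normSq_of_unit x.1 x.2
  rw [EuclideanSpace.norm_eq]
  rw [show (1 : ℝ) = Real.sqrt 1 by simp]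
  apply Real.sqrt_le_sqrt
  rw [Fin.sum_univ_two, psiFun_apply0, psiFun_apply1]
  simp only [Real.norm_eq_abs, sq_abs]
  nlinarith [sq_nonneg x.1.imJ, sq_nonneg x.1.imK]

lemma psiFun_continuous : Continuous psiFun := by
  apply (PiLp.continuous_toLp 2 (fun _ : Fin 2 => ℝ)).comp
  apply continuous_pi
  intro i
  fin_cases i
  · exact Quaternion.continuous_re.comp continuous_subtype_val
  · exact Quaternion.continuous_imI.comp continuous_subtype_val

noncomputable def PhiMap : S3 → Metric.closedBall (0 : EuclideanSpace ℝ (Fin 2)) 1 :=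
  fun x => ⟨psiFun x, psiFun_mem x⟩

lemma PhiMap_resp : ∀ a b, rel17 a b → PhiMap a = PhiMap b := by
  intro a b hab
  obtain ⟨h1, h2⟩ := rel17_re_imI hab
  apply Subtype.ext
  ext i
  fin_cases i
  · exact h1.symm
  · exact h2.symm

noncomputable def Fmap : Quot rel17 → Metric.closedBall (0 : EuclideanSpace ℝ (Fin 2)) 1 :=
  Quot.lift PhiMap PhiMap_resp

lemma Fmap_mk (a : S3) : Fmap (Quot.mk rel17 a) = PhiMap a := rfl

/-- The orbit space `S³/T¹` of the conjugation action `t·h = t h t⁻¹` is a closed 2-disk. -/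
theorem S3_quotient_conjugation_homeomorphic_D2 :
    Nonempty (Quot rel17 ≃ₜ Metric.closedBall (0 : EuclideanSpace ℝ (Fin 2)) 1) := by
  -- compactness of S3
  haveI : CompactSpace S3 := by
    have h1 : IsCompact {h : Quaternion ℝ | ‖h‖ = 1} := by
      have h2 : {h : Quaternion ℝ | ‖h‖ = 1} = Metric.sphere (0 : Quaternion ℝ) 1 := by
        ext h; simp [dist_zero_right]
      exact h2 ▸ isCompact_sphere (0 : Quaternion ℝ) 1
    exact isCompact_iff_compactSpace.mp h1
  have hFcont : Continuous Fmap :=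
    continuous_quot_lift PhiMap_resp (psiFun_continuous.subtype_mk _)
  have hFinj : Function.Injective Fmap := by
    rintro ⟨a⟩ ⟨b⟩ hab
    apply Quot.sound
    rw [Fmap_mk, Fmap_mk] at hab
    have h' : psiFun a = psiFun b := congrArg Subtype.val hab
    have h0 := congrArg (fun v : EuclideanSpace ℝ (Fin 2) => v 0) h'
    have h1 := congrArg (fun v : EuclideanSpace ℝ (Fin 2) => v 1) h'
    exact rel17_of_eq h0.symm h1.symm
  have hFsurj : Function.Surjective Fmap := by
    rintro ⟨p, hp⟩
    have hp' : (p 0) ^ 2 + (p 1) ^ 2 ≤ 1 := by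
      rw [Metric.mem_closedBall, dist_zero_right, EuclideanSpace.norm_eq] at hp
      have h2 : Real.sqrt (∑ i, ‖p i‖ ^ 2) ≤ 1 := by simpa using hp
      have h3 : (∑ i, ‖p i‖ ^ 2) ≤ 1 := by
        nlinarith [Real.sq_sqrt (show (0:ℝ) ≤ ∑ i, ‖p i‖ ^ 2 by positivity),
          Real.sqrt_nonneg (∑ i, ‖p i‖ ^ 2)]
      rw [Fin.sum_univ_two] at h3
      simpa [Real.norm_eq_abs, sq_abs] using h3
    set r : ℝ := Real.sqrt (1 - (p 0) ^ 2 - (p 1) ^ 2) with hr_def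
    have hrsq : r ^ 2 = 1 - (p 0) ^ 2 - (p 1) ^ 2 := Real.sq_sqrt (by linarith)
    let q : Quaternion ℝ := ⟨p 0, p 1, r, 0⟩
    have hq : ‖q‖ = 1 := by
      apply unit_of_normSq
      show (p 0) ^ 2 + (p 1) ^ 2 + r ^ 2 + 0 ^ 2 = 1
      rw [hrsq]; ring
    refine ⟨Quot.mk _ ⟨q, hq⟩, ?_⟩
    rw [Fmap_mk]
    apply Subtype.ext
    ext i
    fin_cases i
    · show psiFun _ 0 = p 0; rfl
    · show psiFun _ 1 = p 1; rfl
  let e : Quot rel17 ≃ Metric.closedBall (0 : EuclideanSpace ℝ (Fin 2)) 1 :=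
    Equiv.ofBijective Fmap ⟨hFinj, hFsurj⟩
  exact ⟨Continuous.homeoOfEquivCompactToT2 (f := e) hFcont⟩
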